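/- The set B = {e_{i_1} + e_{i_4} − e_{i_1+1} − e_{i_4−1} : 1 ≤ i_1 < i_4 ≤ m, i_1 + 2 ≤ i_4} is a Markov basis for the matrix A with rows (0,1,...,m-1) and (1,...,1): for every b ∈ ℕ^2, any two elements s, s' of the fiber F_b(A) = {s ∈ ℕ^m : As = b} are connected by a finite sequence of moves from ±B staying inside F_b(A). -/

import Mathlib

open Finset

/-- The set of moves `B = {e_{i₁} + e_{i₄} − e_{i₁+1} − e_{i₄−1} : i₁ + 2 ≤ i₄}`
(in `1`-indexed notation) in `ℤ^m`. -/
def movesB (m : ℕ) : Set (Fin m → ℤ) :=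
  {z | ∃ i₁ i₄ : Fin m, i₁.1 + 2 ≤ i₄.1 ∧
    z = fun t => (if t = i₁ then 1 else 0) + (if t = i₄ then 1 else 0)
      - (if t.1 = i₁.1 + 1 then 1 else 0) - (if t.1 + 1 = i₄.1 then 1 else 0)}

namespace MBaux

/-- The "down" move: subtract at `i` and `k`, add at `i+1` and `k-1`. Its negation is in `movesB`. -/
def mv {m : ℕ} (i k : Fin m) : Fin m → ℤ := fun t =>
  (if t.1 = i.1 + 1 then 1 else 0) + (if t.1 + 1 = k.1 then 1 else 0)
    - (if t = i then 1 else 0) - (if t = k then 1 else 0)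

lemma neg_mv_mem {m : ℕ} (i k : Fin m) (h : i.1 + 2 ≤ k.1) : -(mv i k) ∈ movesB m := by
  refine ⟨i, k, h, funext fun t => ?_⟩
  simp only [Pi.neg_apply, mv]
  ring

/-- Reachability by moves of `±B` staying nonnegative at each step (given the start is). -/
inductive Reach (m : ℕ) (s : Fin m → ℤ) : (Fin m → ℤ) → Prop
  | refl : Reach m s s
  | tail {u : Fin m → ℤ} (z : Fin m → ℤ) (h : Reach m s u)
      (hz : z ∈ movesB m ∨ -z ∈ movesB m) (hnn : ∀ t, 0 ≤ u t + z t) :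
      Reach m s (u + z)

lemma Reach.trans' {m : ℕ} {s u v : Fin m → ℤ} (h1 : Reach m s u) (h2 : Reach m u v) :
    Reach m s v := by
  induction h2 with
  | refl => exact h1
  | tail z h hz hnn ih => exact Reach.tail z ih hz hnn

lemma Reach.nonneg {m : ℕ} {s u : Fin m → ℤ} (h : Reach m s u) (hs : ∀ t, 0 ≤ s t) :
    ∀ t, 0 ≤ u t := by
  induction h with
  | refl => exact hs
  | tail z h hz hnn ih => exact hnn

lemma Reach.symm' {m : ℕ} {s u : Fin m → ℤ} (hs : ∀ t, 0 ≤ s t) (h : Reach m s u) :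
    Reach m u s := by
  induction h with
  | refl => exact Reach.refl
  | @tail u' z h hz hnn ih =>
    have hu : ∀ t, 0 ≤ u' t := h.nonneg hs
    have hz' : (-z) ∈ movesB m ∨ -(-z) ∈ movesB m := by
      rcases hz with h' | h'
      · exact Or.inr (by simpa using h')
      · exact Or.inl h'
    have step : Reach m (u' + z) u' := by
      have := Reach.tail (s := u' + z) (-z) Reach.refl hz' (fun t => by simpa using hu t)
      simpa using this
    exact step.trans' ih

lemma sum_mul_mv {m : ℕ} (c : Fin m → ℤ) (i k : Fin m) (h : i.1 + 2 ≤ k.1) :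
    ∑ t, c t * mv i k t
      = c ⟨i.1 + 1, by have := k.2; omega⟩ + c ⟨k.1 - 1, by have := k.2; omega⟩ - c i - c k := by
  have hm := k.2
  have h1 : ∀ t : Fin m, t.1 = i.1 + 1 ↔ t = ⟨i.1 + 1, by omega⟩ := by
    intro t; rw [Fin.ext_iff]
  have h2 : ∀ t : Fin m, t.1 + 1 = k.1 ↔ t = ⟨k.1 - 1, by omega⟩ := by
    intro t; rw [Fin.ext_iff]; simp; omega
  simp only [mv, h1, h2, mul_add, mul_sub, mul_ite, mul_one, mul_zero,
    Finset.sum_add_distrib, Finset.sum_sub_distrib, Finset.sum_ite_eq',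
    Finset.mem_univ, if_true]

lemma mv_sum0 {m : ℕ} (i k : Fin m) (h : i.1 + 2 ≤ k.1) : ∑ t, mv i k t = 0 := by
  have := sum_mul_mv (fun _ => (1:ℤ)) i k h
  simpa using this

lemma mv_wsum0 {m : ℕ} (i k : Fin m) (h : i.1 + 2 ≤ k.1) :
    ∑ t : Fin m, (t.1 : ℤ) * mv i k t = 0 := by
  have heq := sum_mul_mv (fun t => (t.1 : ℤ)) i k h
  simp only [Fin.val_mk] at heq
  rw [heq]
  have := k.2
  omega

lemma mv_phisum {m : ℕ} (i k : Fin m) (h : i.1 + 2 ≤ k.1) :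
    ∑ t : Fin m, (t.1 : ℤ)^2 * mv i k t = 2*(i.1:ℤ) - 2*(k.1:ℤ) + 2 := by
  have heq := sum_mul_mv (fun t => (t.1 : ℤ)^2) i k h
  simp only [Fin.val_mk] at heq
  rw [heq]
  have hk1 : ((k.1 - 1 : ℕ) : ℤ) = (k.1 : ℤ) - 1 := by omega
  have hi1 : ((i.1 + 1 : ℕ) : ℤ) = (i.1 : ℤ) + 1 := by omega
  rw [hk1, hi1]
  ring

lemma step_nonneg {m : ℕ} (i k : Fin m) (h : i.1 + 2 ≤ k.1) (s : Fin m → ℤ)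
    (hs : ∀ t, 0 ≤ s t) (hi : 1 ≤ s i) (hk : 1 ≤ s k) :
    ∀ t, 0 ≤ s t + mv i k t := by
  intro t
  have h1 := hs t
  simp only [mv]
  by_cases hti : t = i
  · subst hti
    rw [if_neg (by omega), if_neg (by omega), if_pos rfl,
      if_neg (by intro hh; subst hh; omega)]
    omega
  by_cases htk : t = k
  · subst htk
    rw [if_neg (by omega), if_neg (by omega), if_neg (by intro hh; subst hh; omega),
      if_pos rfl]
    omega
  · rw [if_neg hti, if_neg htk]
    split_ifs <;> omega

/-- One step of the "down" move. -/
lemma step_reach {m : ℕ} (i k : Fin m) (h : i.1 + 2 ≤ k.1) (s : Fin m → ℤ)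
    (hs : ∀ t, 0 ≤ s t) (hi : 1 ≤ s i) (hk : 1 ≤ s k) :
    Reach m s (s + mv i k) :=
  Reach.tail (mv i k) Reach.refl (Or.inr (neg_mv_mem i k h)) (step_nonneg i k h s hs hi hk)

/-- Characterization of balanced nonnegative vectors. -/
lemma balanced_char {m : ℕ} (s : Fin m → ℤ) (hs : ∀ t, 0 ≤ s t)
    (hbal : ∀ i k : Fin m, i.1 + 2 ≤ k.1 → s i = 0 ∨ s k = 0)
    (hN : 0 < ∑ t, s t) (j : Fin m) :
    s j = (if (j.1 : ℤ) = (∑ t, (t.1:ℤ) * s t) / (∑ t, s t)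
             then (∑ t, s t) - (∑ t, (t.1:ℤ) * s t) % (∑ t, s t) else 0)
        + (if (j.1 : ℤ) = (∑ t, (t.1:ℤ) * s t) / (∑ t, s t) + 1
             then (∑ t, (t.1:ℤ) * s t) % (∑ t, s t) else 0) := by
  set N := ∑ t, s t with hNdef
  set W := ∑ t, (t.1:ℤ) * s t with hWdef
  have hne : (Finset.univ.filter (fun t : Fin m => s t ≠ 0)).Nonempty := by
    by_contra hcon
    rw [Finset.not_nonempty_iff_eq_empty, Finset.filter_eq_empty_iff] at hcon
    have : N = 0 := Finset.sum_eq_zero fun t _ => not_not.mp (hcon (Finset.mem_univ t))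
    omega
  set v := (Finset.univ.filter (fun t : Fin m => s t ≠ 0)).min' hne with hvdef
  have hvs : s v ≠ 0 := by
    have := Finset.min'_mem _ hne
    simpa using this
  have hvmin : ∀ t : Fin m, s t ≠ 0 → v ≤ t := by
    intro t ht
    exact Finset.min'_le _ _ (by simpa using ht)
  have hwin : ∀ t : Fin m, s t ≠ 0 → t.1 = v.1 ∨ t.1 = v.1 + 1 := by
    intro t ht
    have h1 : v.1 ≤ t.1 := hvmin t ht
    by_contra hcon
    push_neg at hcon
    have h2 : v.1 + 2 ≤ t.1 := by omega
    rcases hbal v t h2 with h | h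
    · exact hvs h
    · exact ht h
  have hsv1 : 1 ≤ s v := by have := hs v; omega
  set D := W - (v.1:ℤ) * N with hDdef
  have hD : D = ∑ t, (if t.1 = v.1 + 1 then s t else 0) := by
    rw [hDdef, hWdef, hNdef, Finset.mul_sum, ← Finset.sum_sub_distrib]
    apply Finset.sum_congr rfl
    intro t _
    by_cases ht : s t = 0
    · simp [ht]
    · rcases hwin t ht with h | h
      · rw [if_neg (by omega)]
        have hc : (t.1 : ℤ) = (v.1 : ℤ) := by omega
        rw [hc]; ring
      · rw [if_pos h]
        have hc : (t.1 : ℤ) = (v.1 : ℤ) + 1 := by omega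
        rw [hc]; ring
  have hD0 : 0 ≤ D := by
    rw [hD]
    apply Finset.sum_nonneg
    intro t _
    split_ifs
    · exact hs t
    · exact le_refl 0
  have hrest : N - D = ∑ t, (if t.1 = v.1 + 1 then 0 else s t) := by
    rw [hD, hNdef, ← Finset.sum_sub_distrib]
    apply Finset.sum_congr rfl
    intro t _
    split_ifs <;> ring
  have hrest_v : s v ≤ ∑ t, (if t.1 = v.1 + 1 then 0 else s t) := by
    have hmono := Finset.single_le_sum (f := fun t : Fin m => if t.1 = v.1 + 1 then 0 else s t)
      (fun t _ => by split_ifs; exacts [le_refl 0, hs t]) (Finset.mem_univ v)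
    rw [if_neg (by omega)] at hmono
    exact hmono
  have hDN : D < N := by
    rw [← hrest] at hrest_v
    omega
  have hWeq : W = D + N * (v.1:ℤ) := by rw [hDdef]; ring
  have hq : W / N = (v.1:ℤ) := by
    rw [hWeq, Int.add_mul_ediv_left _ _ (by omega : N ≠ 0),
      Int.ediv_eq_zero_of_lt hD0 hDN, zero_add]
  have hr : W % N = D := by
    rw [hWeq, Int.add_mul_emod_self_left, Int.emod_eq_of_lt hD0 hDN]
  rw [hq, hr]
  by_cases hjv : j = v
  · have hj1 : j.1 = v.1 := by rw [hjv]
    rw [if_pos (by omega), if_neg (by omega)]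
    have hsv_eq : N - D = s j := by
      rw [hrest, Finset.sum_eq_single j]
      · rw [if_neg (by omega)]
      · intro t _ htv
        split_ifs with hcond
        · rfl
        · by_contra hst
          rcases hwin t hst with h | h
          · exact htv (Fin.ext (by omega))
          · exact hcond h
      · exact fun hmem => absurd (Finset.mem_univ j) hmem
    omega
  · have hjvn : j.1 ≠ v.1 := fun hh => hjv (Fin.ext hh)
    by_cases hjv1 : j.1 = v.1 + 1
    · rw [if_neg (by omega), if_pos (by omega)]
      have hDj : D = s j := by
        rw [hD, Finset.sum_eq_single j]
        · rw [if_pos hjv1]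
        · intro t _ htj
          split_ifs with hcond
          · exact absurd (Fin.ext (by omega)) htj
          · rfl
        · exact fun hmem => absurd (Finset.mem_univ j) hmem
      omega
    · rw [if_neg (by omega), if_neg (by omega)]
      have : s j = 0 := by
        by_contra hst
        rcases hwin j hst with h | h
        · exact hjvn h
        · exact hjv1 h
      omega

lemma balanced_unique {m : ℕ} (s s' : Fin m → ℤ) (hs : ∀ t, 0 ≤ s t) (hs' : ∀ t, 0 ≤ s' t)
    (hbal : ∀ i k : Fin m, i.1 + 2 ≤ k.1 → s i = 0 ∨ s k = 0)
    (hbal' : ∀ i k : Fin m, i.1 + 2 ≤ k.1 → s' i = 0 ∨ s' k = 0)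
    (hNeq : (∑ t, s t) = ∑ t, s' t) (hWeq : (∑ t, (t.1:ℤ) * s t) = ∑ t, (t.1:ℤ) * s' t) :
    s = s' := by
  have hN0 : 0 ≤ ∑ t, s t := Finset.sum_nonneg fun t _ => hs t
  rcases eq_or_lt_of_le hN0 with hz | hpos
  · funext j
    have h1 : s j = 0 :=
      (Finset.sum_eq_zero_iff_of_nonneg (fun t _ => hs t)).mp hz.symm j (Finset.mem_univ j)
    have h2 : s' j = 0 :=
      (Finset.sum_eq_zero_iff_of_nonneg (fun t _ => hs' t)).mp (by omega) j (Finset.mem_univ j)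
    rw [h1, h2]
  · funext j
    rw [balanced_char s hs hbal hpos j, balanced_char s' hs' hbal' (by omega) j, hNeq, hWeq]

def Phi {m : ℕ} (s : Fin m → ℤ) : ℤ := ∑ t : Fin m, (t.1 : ℤ)^2 * s t

lemma Phi_nonneg {m : ℕ} (s : Fin m → ℤ) (hs : ∀ t, 0 ≤ s t) : 0 ≤ Phi s :=
  Finset.sum_nonneg fun t _ => mul_nonneg (by positivity) (hs t)

lemma connect {m : ℕ} : ∀ n : ℕ, ∀ s s' : Fin m → ℤ, (∀ t, 0 ≤ s t) → (∀ t, 0 ≤ s' t) →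
    (∑ t, s t) = (∑ t, s' t) → (∑ t, (t.1:ℤ) * s t) = (∑ t, (t.1:ℤ) * s' t) →
    (Phi s + Phi s').toNat ≤ n → Reach m s s' := by
  intro n
  induction n using Nat.strong_induction_on with
  | _ n ih =>
    intro s s' hs hs' hNeq hWeq hB
    by_cases hub : ∃ i k : Fin m, i.1 + 2 ≤ k.1 ∧ 1 ≤ s i ∧ 1 ≤ s k
    · obtain ⟨i, k, hik, hi, hk⟩ := hub
      have hnn2 : ∀ t, 0 ≤ (s + mv i k) t := step_nonneg i k hik s hs hi hk
      have hN2 : (∑ t, (s + mv i k) t) = ∑ t, s t := by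
        simp only [Pi.add_apply]
        rw [Finset.sum_add_distrib, mv_sum0 i k hik, add_zero]
      have hW2 : (∑ t, (t.1:ℤ) * (s + mv i k) t) = ∑ t, (t.1:ℤ) * s t := by
        simp only [Pi.add_apply, mul_add]
        rw [Finset.sum_add_distrib, mv_wsum0 i k hik, add_zero]
      have hPhi2 : Phi (s + mv i k) = Phi s + (2*(i.1:ℤ) - 2*(k.1:ℤ) + 2) := by
        unfold Phi
        simp only [Pi.add_apply, mul_add]
        rw [Finset.sum_add_distrib, mv_phisum i k hik]
      have hlt : (Phi (s + mv i k) + Phi s').toNat < n := by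
        have p1 : 0 ≤ Phi (s + mv i k) := Phi_nonneg _ hnn2
        have p2 : 0 ≤ Phi s' := Phi_nonneg _ hs'
        have p3 : Phi (s + mv i k) < Phi s := by
          rw [hPhi2]
          have : (i.1:ℤ) + 2 ≤ (k.1:ℤ) := by omega
          omega
        omega
      have hrec : Reach m (s + mv i k) s' :=
        ih _ hlt (s + mv i k) s' hnn2 hs' (by rw [hN2, hNeq]) (by rw [hW2, hWeq]) le_rfl
      exact (step_reach i k hik s hs hi hk).trans' hrec
    · by_cases hub' : ∃ i k : Fin m, i.1 + 2 ≤ k.1 ∧ 1 ≤ s' i ∧ 1 ≤ s' k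
      · obtain ⟨i, k, hik, hi, hk⟩ := hub'
        have hnn2 : ∀ t, 0 ≤ (s' + mv i k) t := step_nonneg i k hik s' hs' hi hk
        have hN2 : (∑ t, (s' + mv i k) t) = ∑ t, s' t := by
          simp only [Pi.add_apply]
          rw [Finset.sum_add_distrib, mv_sum0 i k hik, add_zero]
        have hW2 : (∑ t, (t.1:ℤ) * (s' + mv i k) t) = ∑ t, (t.1:ℤ) * s' t := by
          simp only [Pi.add_apply, mul_add]
          rw [Finset.sum_add_distrib, mv_wsum0 i k hik, add_zero]
        have hPhi2 : Phi (s' + mv i k) = Phi s' + (2*(i.1:ℤ) - 2*(k.1:ℤ) + 2) := by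
          unfold Phi
          simp only [Pi.add_apply, mul_add]
          rw [Finset.sum_add_distrib, mv_phisum i k hik]
        have hlt : (Phi s + Phi (s' + mv i k)).toNat < n := by
          have p1 : 0 ≤ Phi (s' + mv i k) := Phi_nonneg _ hnn2
          have p2 : 0 ≤ Phi s := Phi_nonneg _ hs
          have p3 : Phi (s' + mv i k) < Phi s' := by
            rw [hPhi2]
            have : (i.1:ℤ) + 2 ≤ (k.1:ℤ) := by omega
            omega
          omega
        have hrec : Reach m s (s' + mv i k) :=
          ih _ hlt s (s' + mv i k) hs hnn2 (by rw [hN2, hNeq]) (by rw [hW2, hWeq]) le_rfl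
        exact hrec.trans' ((step_reach i k hik s' hs' hi hk).symm' hs')
      · have hbal : ∀ i k : Fin m, i.1 + 2 ≤ k.1 → s i = 0 ∨ s k = 0 := by
          intro i k hik
          by_contra hcon
          push_neg at hcon
          exact hub ⟨i, k, hik, by have := hs i; omega, by have := hs k; omega⟩
        have hbal' : ∀ i k : Fin m, i.1 + 2 ≤ k.1 → s' i = 0 ∨ s' k = 0 := by
          intro i k hik
          by_contra hcon
          push_neg at hcon
          exact hub' ⟨i, k, hik, by have := hs' i; omega, by have := hs' k; omega⟩
        rw [balanced_unique s s' hs hs' hbal hbal' hNeq hWeq]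
        exact Reach.refl

lemma toWitness {m : ℕ} {s s' : Fin m → ℤ} (h : Reach m s s') (hs : ∀ t, 0 ≤ s t) :
    ∃ (L : ℕ) (z : Fin L → (Fin m → ℤ)),
      (∀ l, z l ∈ movesB m ∨ -z l ∈ movesB m) ∧
      s' = s + ∑ l, z l ∧
      ∀ j : ℕ, j ≤ L → ∀ t : Fin m,
        0 ≤ s t + ∑ l ∈ Finset.univ.filter (fun l : Fin L => l.1 < j), z l t := by
  induction h with
  | refl =>
    exact ⟨0, Fin.elim0, fun l => l.elim0, by simp, fun j hj t => by simpa using hs t⟩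
  | tail z hru hz hnn ih =>
    obtain ⟨L, zs, hmem, htot, hpart⟩ := ih
    refine ⟨L + 1, Fin.snoc zs z, ?_, ?_, ?_⟩
    · intro l
      induction l using Fin.lastCases with
      | last => simpa using hz
      | cast i => simpa using hmem i
    · have hsum : (∑ l : Fin (L+1), Fin.snoc zs z l) = (∑ l : Fin L, zs l) + z := by
        rw [Fin.sum_univ_castSucc]
        simp
      rw [hsum, htot, add_assoc]
    · intro j hj t
      by_cases hjL : j ≤ L
      · have key : (∑ l ∈ Finset.univ.filter (fun l : Fin (L+1) => l.1 < j),
            (Fin.snoc zs z : Fin (L+1) → Fin m → ℤ) l t)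
            = ∑ l ∈ Finset.univ.filter (fun l : Fin L => l.1 < j), zs l t := by
          rw [Finset.sum_filter, Finset.sum_filter, Fin.sum_univ_castSucc]
          simp only [Fin.coe_castSucc, Fin.snoc_castSucc, Fin.val_last, Fin.snoc_last]
          rw [if_neg (by omega), add_zero]
        rw [key]
        exact hpart j hjL t
      · have hj1 : j = L + 1 := by omega
        subst hj1
        have huniv : Finset.univ.filter (fun l : Fin (L+1) => l.1 < L + 1) = Finset.univ :=
          Finset.filter_true_of_mem fun l _ => l.isLt
        rw [huniv]
        have hsum : (∑ l : Fin (L+1), (Fin.snoc zs z : Fin (L+1) → Fin m → ℤ) l t)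
            = (∑ l : Fin L, zs l t) + z t := by
          rw [Fin.sum_univ_castSucc]
          simp
        rw [hsum]
        have h2 := congrFun htot t
        simp only [Pi.add_apply, Finset.sum_apply] at h2
        have h3 := hnn t
        linarith [h2, h3]

end MBaux

/-- `B` is a Markov basis for the matrix `A` with rows `(0,1,...,m-1)`
and `(1,...,1)`: any two points of a fiber `{s ∈ ℕ^m : As = b}` are connected by a
path of moves from `±B` staying inside the fiber (nonnegativity of all partial sums
suffices, since each move is in `ker A`). -/
theorem markov_basis_rational_normal_curve
    (m : ℕ) (b₁ b₂ : ℤ) (s s' : Fin m → ℤ)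
    (hs : ∀ j, 0 ≤ s j) (hs' : ∀ j, 0 ≤ s' j)
    (hAs : (∑ j, (j.1 : ℤ) * s j) = b₁ ∧ (∑ j, s j) = b₂)
    (hAs' : (∑ j, (j.1 : ℤ) * s' j) = b₁ ∧ (∑ j, s' j) = b₂) :
    ∃ (L : ℕ) (z : Fin L → (Fin m → ℤ)),
      (∀ l, z l ∈ movesB m ∨ -z l ∈ movesB m) ∧
      s' = s + ∑ l, z l ∧
      ∀ j : ℕ, j ≤ L → ∀ t : Fin m,
        0 ≤ s t + ∑ l ∈ Finset.univ.filter (fun l : Fin L => l.1 < j), z l t := by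
  obtain ⟨h1, h2⟩ := hAs
  obtain ⟨h1', h2'⟩ := hAs'
  have hreach : MBaux.Reach m s s' :=
    MBaux.connect _ s s' hs hs' (by rw [h2, h2']) (by rw [h1, h1']) le_rfl
  exact MBaux.toWitness hreach hs
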